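/- Let g > 0 be a constant, let f(s) = a + bs be a linear function on ℝ, and let x ∈ C¹([0,∞)) solve dx/dt = f(t) - g·x(t) with x(0) = x⁰. Define x̃(t) = f(t - 1/g)/g. Then for all t ≥ 0, x(t) - x̃(t) = exp(-gt)·(x⁰ - f(-1/g)/g). In particular the D-QSSA approximation is asymptotically exact: the error decays to zero exponentially as t → ∞. -/

import Mathlib

/-- For `dx/dt = f(t) - g·x(t)` with constant `g > 0` and linear `f(s) = a + b·s`,
the D-QSSA approximation `x̃(t) = f(t - 1/g)/g` satisfies
`x(t) - x̃(t) = exp(-gt)·(x⁰ - f(-1/g)/g)` for all `t ≥ 0`; in particular the error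
decays to zero exponentially as `t → ∞`. -/
theorem dqssa_constant_coefficient_linear_f_exact_error
    (g a b x0 : ℝ) (hg : 0 < g) (x : ℝ → ℝ)
    (hxc : ContinuousOn x (Set.Ici (0:ℝ)))
    (hode : ∀ t ∈ Set.Ici (0:ℝ), HasDerivAt x ((a + b * t) - g * x t) t)
    (hx0 : x 0 = x0) :
    ∀ t ∈ Set.Ici (0:ℝ),
      x t - (a + b * (t - 1 / g)) / g
        = Real.exp (-g * t) * (x0 - (a + b * (-(1 / g))) / g) := by
  set h : ℝ → ℝ := fun t => (x t - (a + b * (t - 1 / g)) / g) * Real.exp (g * t) with hh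
  have hderiv : ∀ t ∈ Set.Ici (0:ℝ), HasDerivAt h 0 t := by
    intro t ht
    have h1 : HasDerivAt (fun t => x t - (a + b * (t - 1 / g)) / g)
        ((a + b * t) - g * x t - b / g) t := by
      have h2 : HasDerivAt (fun t : ℝ => (a + b * (t - 1 / g)) / g) (b / g) t := by
        have : HasDerivAt (fun t : ℝ => (a + b * (t - 1 / g)) / g) ((b * 1) / g) t := by
          exact (((hasDerivAt_id t).sub_const (1/g)).const_mul b).const_add a |>.div_const g
        simpa using this
      exact (hode t ht).sub h2
    have h3 : HasDerivAt (fun t => Real.exp (g * t)) (g * Real.exp (g * t)) t := by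
      have := (Real.hasDerivAt_exp (g * t)).comp t ((hasDerivAt_id t).const_mul g)
      simpa [mul_comm, Function.comp_def] using this
    have : HasDerivAt h _ t := h1.mul h3
    convert this using 1
    have hx := Real.exp_ne_zero (g * t)
    have hg0 : g ≠ 0 := hg.ne'
    field_simp
    ring
  have hcont : ContinuousOn h (Set.Ici (0:ℝ)) := by
    apply ContinuousOn.mul
    · exact hxc.sub (Continuous.continuousOn (by continuity))
    · exact Continuous.continuousOn (by continuity)
  intro t ht
  have hconst : h t = h 0 := by
    have := constant_of_has_deriv_right_zero (f := h) (a := 0) (b := t)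
      (hcont.mono (Set.Icc_subset_Ici_self))
      (fun s hs => ((hderiv s hs.1).hasDerivWithinAt))
      t (Set.mem_Icc.mpr ⟨ht, le_refl t⟩)
    exact this
  have key : (x t - (a + b * (t - 1 / g)) / g) * Real.exp (g * t)
      = x0 - (a + b * (-(1 / g))) / g := by
    have h0 : h 0 = x0 - (a + b * (-(1 / g))) / g := by
      simp [hh, hx0]
    rw [← h0]; exact hconst
  have hexp := Real.exp_ne_zero (g * t)
  rw [neg_mul, Real.exp_neg, ← key, inv_mul_eq_div, mul_div_assoc, div_self hexp, mul_one]
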